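/- arXiv:2212.05555 — 3 statements merged into one kernel-verified Lean document; each statement's English description precedes it below -/
import Mathlib

section
/- Define M₀(z) = e^z and, for k ≥ 1, M_k(z) = (e^z − Σ_{j=0}^{k-1} z^j/j!)/z^k for z ≠ 0 (extended analytically by M_k(0) = 1/k!). Then for every k ∈ ℕ and every complex z with Re(z) ≤ 0, |M_k(z)| ≤ 1/k!. -/
open Complex

/-- The entire function `M_k(z) = Σ_{j=0}^∞ z^j/(j+k)!`, which for `z ≠ 0` equals
`(e^z − Σ_{j<k} z^j/j!)/z^k`, with `M_k(0) = 1/k!` and `M₀ = exp`. -/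
noncomputable def Mfun (k : ℕ) (z : ℂ) : ℂ :=
  ∑' j : ℕ, z ^ j / (Nat.factorial (j + k))

lemma Mfun_summable (k : ℕ) (z : ℂ) :
    Summable (fun j : ℕ => z ^ j / (Nat.factorial (j + k) : ℂ)) := by
  apply Summable.of_norm
  apply Summable.of_nonneg_of_le (fun j => norm_nonneg _) (fun j => ?_)
    (Real.summable_pow_div_factorial ‖z‖)
  rw [norm_div, norm_pow, Complex.norm_natCast]
  gcongr
  exact Nat.le_add_right j k

lemma Mfun_zero (z : ℂ) : Mfun 0 z = Complex.exp z := by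
  simp only [Mfun, Nat.add_zero]
  rw [Complex.exp_eq_exp_ℂ, NormedSpace.exp_eq_tsum_div]

/-- key recursion via integral -/
lemma Mfun_succ (k : ℕ) (z : ℂ) :
    Mfun (k + 1) z = ∫ s in Set.Ioc (0:ℝ) 1, (s:ℂ) ^ k * Mfun k (s * z) := by
  have hF : ∀ j : ℕ, MeasureTheory.Integrable
      (fun s : ℝ => (s:ℂ) ^ (j + k) * z ^ j / (Nat.factorial (j + k) : ℂ))
      (MeasureTheory.volume.restrict (Set.Ioc (0:ℝ) 1)) := by
    intro j
    apply Continuous.integrableOn_Ioc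
    continuity
  have hnorm : ∀ j : ℕ, ∫ s in Set.Ioc (0:ℝ) 1,
      ‖(s:ℂ) ^ (j + k) * z ^ j / (Nat.factorial (j + k) : ℂ)‖
      = (∫ s in Set.Ioc (0:ℝ) 1, s ^ (j + k)) * (‖z‖ ^ j / (Nat.factorial (j + k) : ℝ)) := by
    intro j
    rw [← MeasureTheory.integral_mul_const]
    apply MeasureTheory.setIntegral_congr_fun measurableSet_Ioc
    intro s hs
    simp only [norm_div, norm_mul, norm_pow, Complex.norm_natCast, Complex.norm_real,
      Real.norm_of_nonneg hs.1.le]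
    ring
  have hpow : ∀ n : ℕ, (∫ s in Set.Ioc (0:ℝ) 1, s ^ n) = 1 / (n + 1 : ℝ) := by
    intro n
    rw [← intervalIntegral.integral_of_le (by norm_num : (0:ℝ) ≤ 1), integral_pow]
    simp
  have hsum : Summable fun j : ℕ => ∫ s in Set.Ioc (0:ℝ) 1,
      ‖(s:ℂ) ^ (j + k) * z ^ j / (Nat.factorial (j + k) : ℂ)‖ := by
    apply Summable.of_nonneg_of_le
      (fun j => MeasureTheory.integral_nonneg fun s => norm_nonneg _)
      (fun j => ?_) (Real.summable_pow_div_factorial ‖z‖)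
    rw [hnorm j, hpow]
    have h1 : (0:ℝ) < (j + k : ℕ) + 1 := by positivity
    have h2 : ‖z‖ ^ j / (Nat.factorial (j + k) : ℝ) ≤ ‖z‖ ^ j / (Nat.factorial j : ℝ) := by
      apply div_le_div_of_nonneg_left (by positivity) (by positivity)
      exact_mod_cast Nat.factorial_le (Nat.le_add_right j k)
    calc 1 / ((j + k : ℕ) + 1 : ℝ) * (‖z‖ ^ j / (Nat.factorial (j + k) : ℝ))
        ≤ 1 * (‖z‖ ^ j / (Nat.factorial j : ℝ)) := by
          apply mul_le_mul _ h2 (by positivity) (by norm_num)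
          rw [div_le_one h1]; linarith
      _ = ‖z‖ ^ j / (Nat.factorial j : ℝ) := by rw [one_mul]
  have key := MeasureTheory.integral_tsum_of_summable_integral_norm hF hsum
  have hinner : ∀ s : ℝ, s ∈ Set.Ioc (0:ℝ) 1 →
      (∑' j : ℕ, (s:ℂ) ^ (j + k) * z ^ j / (Nat.factorial (j + k) : ℂ))
      = (s:ℂ) ^ k * Mfun k (s * z) := by
    intro s _
    rw [Mfun, ← tsum_mul_left]
    congr 1
    ext j
    rw [mul_pow, pow_add]
    ring
  rw [MeasureTheory.setIntegral_congr_fun measurableSet_Ioc hinner] at key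
  rw [← key, Mfun]
  congr 1
  ext j
  rw [MeasureTheory.integral_div, MeasureTheory.integral_mul_const]
  have : (∫ s in Set.Ioc (0:ℝ) 1, (s:ℂ) ^ (j + k)) = 1 / ((j + k : ℕ) + 1 : ℂ) := by
    have := hpow (j + k)
    simp_rw [← Complex.ofReal_pow]
    calc (∫ s in Set.Ioc (0:ℝ) 1, ((s ^ (j + k) : ℝ) : ℂ))
        = ((∫ s in Set.Ioc (0:ℝ) 1, s ^ (j + k) : ℝ) : ℂ) := integral_ofReal
      _ = 1 / ((j + k : ℕ) + 1 : ℂ) := by rw [this]; push_cast; ring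
  rw [this]
  rw [show j + (k + 1) = (j + k) + 1 by omega, Nat.factorial_succ]
  have hfac : ((Nat.factorial (j + k) : ℂ)) ≠ 0 := Nat.cast_ne_zero.mpr (Nat.factorial_ne_zero _)
  have hc : ((j + k : ℕ) : ℂ) + 1 ≠ 0 := by
    have : ((j + k + 1 : ℕ) : ℂ) ≠ 0 := Nat.cast_ne_zero.mpr (by omega)
    push_cast at this ⊢
    exact this
  push_cast [Nat.factorial_succ] at *
  field_simp
  try ring

/-- For every `k ∈ ℕ` and complex `z` with `Re(z) ≤ 0`, `|M_k(z)| ≤ 1/k!`. -/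
theorem Mfun_bound (k : ℕ) (z : ℂ) (hz : z.re ≤ 0) :
    ‖Mfun k z‖ ≤ 1 / (Nat.factorial k) := by
  induction k generalizing z with
  | zero =>
      rw [Mfun_zero]
      simp only [Nat.factorial_zero, Nat.cast_one, div_one]
      rw [Complex.norm_exp]
      exact Real.exp_le_one_iff.mpr hz
  | succ k ih =>
      rw [Mfun_succ]
      have hb : ∀ s ∈ Set.Ioc (0:ℝ) 1, ‖(s:ℂ) ^ k * Mfun k (s * z)‖
          ≤ s ^ k / (Nat.factorial k : ℝ) := by
        intro s hs
        rw [norm_mul, norm_pow, Complex.norm_real, Real.norm_of_nonneg hs.1.le, div_eq_mul_one_div]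
        apply mul_le_mul_of_nonneg_left _ (pow_nonneg hs.1.le k)
        apply ih
        have hre : ((s:ℂ) * z).re = s * z.re := by simp [Complex.mul_re]
        rw [hre]
        exact mul_nonpos_of_nonneg_of_nonpos hs.1.le hz
      have hgint : MeasureTheory.Integrable (fun s : ℝ => s ^ k / (Nat.factorial k : ℝ))
          (MeasureTheory.volume.restrict (Set.Ioc (0:ℝ) 1)) := by
        apply Continuous.integrableOn_Ioc
        continuity
      have := MeasureTheory.norm_integral_le_of_norm_le hgint
        ((MeasureTheory.ae_restrict_iff' measurableSet_Ioc).mpr (.of_forall hb))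
      refine this.trans ?_
      rw [MeasureTheory.integral_div]
      rw [show (∫ s in Set.Ioc (0:ℝ) 1, s ^ k) = 1 / (k + 1 : ℝ) by
        rw [← intervalIntegral.integral_of_le (by norm_num : (0:ℝ) ≤ 1), integral_pow]; simp]
      rw [Nat.factorial_succ, div_div]
      push_cast
      apply le_of_eq
      ring
end

section
/- For α ∈ (0,2) and n ∈ ℕ, the bivariate spherically contoured α-stable radial density f(r;α) = (1/(2π))∫₀^∞ J₀(rt) t e^{-t^α} dt satisfies f(r;α) = (1/(2πα)) Σ_{k=0}^{n} (−1)^k Γ((2k+2)/α)/((2^k k!)²) · r^{2k} + R(r;α), with |R(r;α)| ≤ Γ((2n+4)/α)/(2πα·(2n+2)!) · r^{2n+2} for all r ≥ 0. -/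
open MeasureTheory Real Set

/-- The Bessel function of the first kind of integer order `ν`. -/
noncomputable def besselJ (ν : ℕ) (x : ℝ) : ℝ :=
  ∑' k : ℕ, (-1 : ℝ) ^ k / (Nat.factorial k * Nat.factorial (k + ν)) * (x / 2) ^ (2 * k + ν)

/-- The radial density of the spherically contoured bivariate α-stable law:
`f(r;α) = (1/(2π)) ∫₀^∞ J₀(rt) t e^{-t^α} dt`. -/
noncomputable def bivariateStablePdf (r α : ℝ) : ℝ :=
  (1 / (2 * π)) * ∫ t in Set.Ioi (0:ℝ), besselJ 0 (r * t) * t * Real.exp (-(t ^ α))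


lemma abs_le_of_deriv {g g' : ℝ → ℝ} {p : ℕ} {c : ℝ} (hc : 0 < c)
    (hg : ∀ t, HasDerivAt g (g' t) t) (hg0 : g 0 = 0) (hcont : Continuous g')
    (hbound : ∀ t, 0 ≤ t → |g' t| ≤ t ^ p / c) :
    ∀ u, 0 ≤ u → |g u| ≤ u ^ (p + 1) / ((p + 1) * c) := by
  intro u hu
  have heq : g u = ∫ t in (0:ℝ)..u, g' t := by
    rw [intervalIntegral.integral_eq_sub_of_hasDerivAt (fun t _ => hg t)
      (hcont.intervalIntegrable 0 u), hg0, sub_zero]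
  rw [heq]
  have h1 : |∫ t in (0:ℝ)..u, g' t| ≤ |∫ t in (0:ℝ)..u, t ^ p / c| := by
    rw [← Real.norm_eq_abs (∫ t in (0:ℝ)..u, g' t)]
    apply intervalIntegral.norm_integral_le_abs_of_norm_le
    · filter_upwards [ae_restrict_mem measurableSet_uIoc] with t ht
      rw [Set.uIoc_of_le hu] at ht
      exact (Real.norm_eq_abs _) ▸ hbound t ht.1.le
    · exact ((continuous_pow p).div_const c).intervalIntegrable 0 u
  calc |∫ t in (0:ℝ)..u, g' t| ≤ |∫ t in (0:ℝ)..u, t ^ p / c| := h1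
    _ = |(u ^ (p+1) - 0 ^ (p+1)) / (p+1) / c| := by
        rw [intervalIntegral.integral_div, integral_pow]
    _ = u ^ (p+1) / ((p+1) * c) := by
        rw [zero_pow (Nat.succ_ne_zero p), sub_zero, abs_of_nonneg (by positivity), div_div]


lemma hasDerivAt_sin_poly (m : ℕ) (t : ℝ) :
    HasDerivAt (fun u : ℝ => ∑ k ∈ Finset.range m, (-1:ℝ)^k * u^(2*k+1) / ((2*k+1).factorial))
      (∑ k ∈ Finset.range m, (-1:ℝ)^k * t^(2*k) / ((2*k).factorial)) t := by
  have h : ∀ k ∈ Finset.range m, HasDerivAt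
      (fun u : ℝ => (-1:ℝ)^k * u^(2*k+1) / ((2*k+1).factorial))
      ((-1:ℝ)^k * t^(2*k) / ((2*k).factorial)) t := by
    intro k _
    have h1 : HasDerivAt (fun u : ℝ => u ^ (2*k+1)) ((2*k+1) * t^(2*k)) t := by
      simpa using hasDerivAt_pow (2*k+1) t
    have h2 := (h1.const_mul ((-1:ℝ)^k)).div_const ((2*k+1).factorial : ℝ)
    convert h2 using 1
    · rfl
    · rfl
    have : ((2*k+1).factorial : ℝ) = (2*k+1) * ((2*k).factorial) := by
      rw [Nat.factorial_succ]; push_cast; ring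
    rw [this]
    have h3 : ((2*k).factorial : ℝ) ≠ 0 := Nat.cast_ne_zero.2 (Nat.factorial_ne_zero _)
    have h4 : (2*(k:ℝ)+1) ≠ 0 := by positivity
    field_simp
  simpa using HasDerivAt.fun_sum h

lemma hasDerivAt_cos_poly (m : ℕ) (t : ℝ) :
    HasDerivAt (fun u : ℝ => ∑ k ∈ Finset.range (m+1), (-1:ℝ)^k * u^(2*k) / ((2*k).factorial))
      (-∑ k ∈ Finset.range m, (-1:ℝ)^k * t^(2*k+1) / ((2*k+1).factorial)) t := by
  have h : ∀ k ∈ Finset.range (m+1), HasDerivAt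
      (fun u : ℝ => (-1:ℝ)^k * u^(2*k) / ((2*k).factorial))
      ((-1:ℝ)^k * (2*k) * t^(2*k-1) / ((2*k).factorial)) t := by
    intro k _
    have h1 : HasDerivAt (fun u : ℝ => u ^ (2*k)) ((2*k) * t^(2*k-1)) t := by
      simpa using hasDerivAt_pow (2*k) t
    have h2 := (h1.const_mul ((-1:ℝ)^k)).div_const ((2*k).factorial : ℝ)
    convert h2 using 1
    · rfl
    · rfl
    ring
  have := HasDerivAt.fun_sum h
  convert this using 1
  · rfl
  · rfl
  rw [Finset.sum_range_succ']
  have h0 : ((-1:ℝ)^0 * (2*((0:ℕ):ℝ)) * t^(2*0-1) / (((2*0).factorial : ℕ) : ℝ)) = 0 := by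
    norm_num
  rw [h0, add_zero, ← Finset.sum_neg_distrib]
  apply Finset.sum_congr rfl
  intro k _
  have e1 : 2*(k+1) = (2*k+1)+1 := by ring
  have e2 : 2*(k+1)-1 = 2*k+1 := by omega
  have e3 : 2*k+1+1-1 = 2*k+1 := by omega
  have h3 : ((2*k+1).factorial : ℝ) ≠ 0 := Nat.cast_ne_zero.2 (Nat.factorial_ne_zero _)
  have h4 : (2*(k:ℝ)+2) ≠ 0 := by positivity
  have hf : ((2*k+1+1).factorial : ℝ) = (2*(k:ℝ)+2) * ((2*k+1).factorial) := by
    rw [Nat.factorial_succ (2*k+1)]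
    push_cast
    ring
  rw [e1, e3, hf, Nat.cast_add, Nat.cast_one, ← neg_div,
    div_eq_div_iff h3 (mul_ne_zero h4 h3)]
  ring

lemma continuous_sin_poly (m : ℕ) :
    Continuous (fun u : ℝ => ∑ k ∈ Finset.range m, (-1:ℝ)^k * u^(2*k+1) / ((2*k+1).factorial)) :=
  continuous_finset_sum _ fun i _ => ((continuous_const.mul (continuous_pow _)).div_const _)

lemma continuous_cos_poly (m : ℕ) :
    Continuous (fun u : ℝ => ∑ k ∈ Finset.range m, (-1:ℝ)^k * u^(2*k) / ((2*k).factorial)) :=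
  continuous_finset_sum _ fun i _ => ((continuous_const.mul (continuous_pow _)).div_const _)

lemma trig_tail_bound (m : ℕ) : ∀ u : ℝ, 0 ≤ u →
    (|Real.cos u - ∑ k ∈ Finset.range m, (-1:ℝ)^k * u^(2*k) / ((2*k).factorial)|
      ≤ u^(2*m) / ((2*m).factorial)) ∧
    (|Real.sin u - ∑ k ∈ Finset.range m, (-1:ℝ)^k * u^(2*k+1) / ((2*k+1).factorial)|
      ≤ u^(2*m+1) / ((2*m+1).factorial)) := by
  induction m with
  | zero =>
    intro u hu
    constructor
    · simpa using Real.abs_cos_le_one u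
    · simp only [Finset.range_zero, Finset.sum_empty, sub_zero, pow_one, Nat.factorial_one,
        Nat.cast_one, div_one, mul_zero, zero_add]
      rcases le_total u 1 with h1 | h1
      · rw [abs_of_nonneg (Real.sin_nonneg_of_nonneg_of_le_pi hu
          (h1.trans (by linarith [Real.pi_gt_three])))]
        exact Real.sin_le hu
      · exact (Real.abs_sin_le_one u).trans h1
  | succ m ih =>
    have hcos : ∀ u : ℝ, 0 ≤ u →
        |Real.cos u - ∑ k ∈ Finset.range (m+1), (-1:ℝ)^k * u^(2*k) / ((2*k).factorial)|
        ≤ u^(2*(m+1)) / ((2*(m+1)).factorial) := by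
      intro u hu
      have hder : ∀ t : ℝ, HasDerivAt
          (fun u : ℝ => Real.cos u - ∑ k ∈ Finset.range (m+1), (-1:ℝ)^k * u^(2*k) / ((2*k).factorial))
          (-(Real.sin t - ∑ k ∈ Finset.range m, (-1:ℝ)^k * t^(2*k+1) / ((2*k+1).factorial))) t := by
        intro t
        have := (Real.hasDerivAt_cos t).fun_sub (hasDerivAt_cos_poly m t)
        convert this using 1
        · rfl
        · rfl
        ring
      have h0 : Real.cos 0 - ∑ k ∈ Finset.range (m+1), (-1:ℝ)^k * (0:ℝ)^(2*k) / ((2*k).factorial) = 0 := by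
        rw [Finset.sum_range_succ']
        simp
      have hcont : Continuous fun t : ℝ =>
          -(Real.sin t - ∑ k ∈ Finset.range m, (-1:ℝ)^k * t^(2*k+1) / ((2*k+1).factorial)) :=
        (Real.continuous_sin.sub (continuous_sin_poly m)).neg
      have hb : ∀ t : ℝ, 0 ≤ t →
          |(-(Real.sin t - ∑ k ∈ Finset.range m, (-1:ℝ)^k * t^(2*k+1) / ((2*k+1).factorial)))|
            ≤ t^(2*m+1) / ((2*m+1).factorial) := by
        intro t ht
        rw [abs_neg]
        exact (ih t ht).2
      have := abs_le_of_deriv (c := ((2*m+1).factorial : ℝ))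
        (by positivity) hder h0 hcont hb u hu
      convert this using 1
      rw [show 2*(m+1) = 2*m+1+1 by ring, Nat.factorial_succ]
      push_cast
      ring
    intro u hu
    refine ⟨hcos u hu, ?_⟩
    have hder : ∀ t : ℝ, HasDerivAt
        (fun u : ℝ => Real.sin u - ∑ k ∈ Finset.range (m+1), (-1:ℝ)^k * u^(2*k+1) / ((2*k+1).factorial))
        (Real.cos t - ∑ k ∈ Finset.range (m+1), (-1:ℝ)^k * t^(2*k) / ((2*k).factorial)) t :=
      fun t => (Real.hasDerivAt_sin t).sub (hasDerivAt_sin_poly (m+1) t)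
    have h0 : Real.sin 0 - ∑ k ∈ Finset.range (m+1), (-1:ℝ)^k * (0:ℝ)^(2*k+1) / ((2*k+1).factorial) = 0 := by
      simp
    have hcont : Continuous fun t : ℝ =>
        Real.cos t - ∑ k ∈ Finset.range (m+1), (-1:ℝ)^k * t^(2*k) / ((2*k).factorial) :=
      Real.continuous_cos.sub (continuous_cos_poly (m+1))
    have hb : ∀ t : ℝ, 0 ≤ t →
        |Real.cos t - ∑ k ∈ Finset.range (m+1), (-1:ℝ)^k * t^(2*k) / ((2*k).factorial)|
          ≤ t^(2*(m+1)) / ((2*(m+1)).factorial) := by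
      intro t ht
      exact hcos t ht
    have := abs_le_of_deriv (c := ((2*(m+1)).factorial : ℝ))
      (by positivity) hder h0 hcont hb u hu
    convert this using 1
    rw [Nat.factorial_succ]
    push_cast
    ring

lemma wallis_prod (k : ℕ) :
    ∏ i ∈ Finset.range k, (2*(i:ℝ)+1)/(2*i+2) = ((2*k).factorial : ℝ) / (4^k * ((k.factorial : ℝ))^2) := by
  induction k with
  | zero => simp
  | succ k ih =>
    rw [Finset.prod_range_succ, ih]
    have e1 : 2*(k+1) = (2*k+1)+1 := by ring
    rw [e1, Nat.factorial_succ, Nat.factorial_succ, Nat.factorial_succ]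
    have h1 : ((2*k).factorial : ℝ) ≠ 0 := Nat.cast_ne_zero.2 (Nat.factorial_ne_zero _)
    have h2 : ((k.factorial : ℝ)) ≠ 0 := Nat.cast_ne_zero.2 (Nat.factorial_ne_zero _)
    have h3 : (4:ℝ)^k ≠ 0 := by positivity
    push_cast
    field_simp
    ring

lemma sin_pow_integral (k : ℕ) :
    ∫ θ in Set.Ioc (0:ℝ) π, Real.sin θ ^ (2*k)
      = π * ((2*k).factorial : ℝ) / (4^k * ((k.factorial : ℝ))^2) := by
  have h := integral_sin_pow_even k
  rw [intervalIntegral.integral_of_le Real.pi_pos.le] at h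
  rw [h, wallis_prod]
  ring

lemma bessel_term_integral (x : ℝ) (k : ℕ) :
    ∫ θ in Set.Ioc (0:ℝ) π, (-1:ℝ)^k * (x * Real.sin θ)^(2*k) / ((2*k).factorial)
      = π * ((-1:ℝ)^k / ((k.factorial : ℝ) * (k.factorial : ℝ)) * (x/2)^(2*k)) := by
  have h1 : ∀ θ : ℝ, (-1:ℝ)^k * (x * Real.sin θ)^(2*k) / ((2*k).factorial)
      = ((-1:ℝ)^k * x^(2*k) / ((2*k).factorial)) * Real.sin θ ^ (2*k) := by
    intro θ
    rw [mul_pow]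
    ring
  simp_rw [h1]
  rw [MeasureTheory.integral_const_mul, sin_pow_integral]
  have h2 : ((2*k).factorial : ℝ) ≠ 0 := Nat.cast_ne_zero.2 (Nat.factorial_ne_zero _)
  have h3 : ((k.factorial : ℝ)) ≠ 0 := Nat.cast_ne_zero.2 (Nat.factorial_ne_zero _)
  have h4 : (x/2)^(2*k) = x^(2*k) / 4^k := by
    rw [div_pow, pow_mul]
    norm_num [pow_mul]
  rw [h4]
  have h5 : (4:ℝ)^k ≠ 0 := by positivity
  field_simp

lemma besselJ_zero (x : ℝ) :
    besselJ 0 x = ∑' k : ℕ, (-1:ℝ)^k / ((k.factorial : ℝ) * (k.factorial : ℝ)) * (x/2)^(2*k) := by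
  simp [besselJ]

lemma bessel_integrable (x : ℝ) (k : ℕ) :
    Integrable (fun θ => (-1:ℝ)^k * (x * Real.sin θ)^(2*k) / ((2*k).factorial : ℝ))
      (volume.restrict (Set.Ioc 0 π)) :=
  (((continuous_const.mul ((continuous_const.mul Real.continuous_sin).pow _)).div_const
    _).integrableOn_Ioc)

lemma bessel_term_bound (x : ℝ) (k : ℕ) (θ : ℝ) :
    ‖(-1:ℝ)^k * (x * Real.sin θ)^(2*k) / ((2*k).factorial : ℝ)‖
      ≤ |x|^(2*k) / ((2*k).factorial : ℝ) := by
  rw [Real.norm_eq_abs, abs_div, abs_mul, abs_pow, abs_pow, abs_neg, abs_one, one_pow, one_mul,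
    Nat.abs_cast]
  refine (div_le_div_iff_of_pos_right (Nat.cast_pos.2 (Nat.factorial_pos _))).2 ?_
  refine pow_le_pow_left₀ (abs_nonneg _) ?_ _
  rw [abs_mul]
  exact mul_le_of_le_one_right (abs_nonneg x) (Real.abs_sin_le_one θ)

lemma summable_aux (x : ℝ) : Summable (fun k : ℕ => |x|^(2*k) / ((2*k).factorial : ℝ)) :=
  (Real.summable_pow_div_factorial |x|).comp_injective (fun a b hab => by omega)

lemma bessel_rep (x : ℝ) :
    (∫ θ in Set.Ioc (0:ℝ) π, Real.cos (x * Real.sin θ)) = π * besselJ 0 x := by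
  have hsum : Summable fun k : ℕ =>
      ∫ θ in Set.Ioc (0:ℝ) π, ‖(-1:ℝ)^k * (x * Real.sin θ)^(2*k) / ((2*k).factorial : ℝ)‖ := by
    refine Summable.of_nonneg_of_le (fun k => integral_nonneg fun θ => norm_nonneg _)
      (fun k => ?_) ((summable_aux x).mul_left π)
    have h1 : (∫ θ in Set.Ioc (0:ℝ) π, ‖(-1:ℝ)^k * (x * Real.sin θ)^(2*k) / ((2*k).factorial : ℝ)‖)
        ≤ ∫ _θ in Set.Ioc (0:ℝ) π, (|x|^(2*k) / ((2*k).factorial : ℝ)) := by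
      refine integral_mono (bessel_integrable x k).norm (integrable_const _)
        (fun θ => bessel_term_bound x k θ)
    refine h1.trans_eq ?_
    rw [integral_const, measureReal_restrict_apply_univ, measureReal_def, Real.volume_Ioc, smul_eq_mul,
      ENNReal.toReal_ofReal (by linarith [Real.pi_pos])]
    ring
  have key := MeasureTheory.integral_tsum_of_summable_integral_norm (bessel_integrable x) hsum
  have hcos : ∀ θ : ℝ, Real.cos (x * Real.sin θ)
      = ∑' k : ℕ, (-1:ℝ)^k * (x * Real.sin θ)^(2*k) / ((2*k).factorial : ℝ) :=
    fun θ => Real.cos_eq_tsum _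
  calc (∫ θ in Set.Ioc (0:ℝ) π, Real.cos (x * Real.sin θ))
      = ∫ θ in Set.Ioc (0:ℝ) π, ∑' k : ℕ, (-1:ℝ)^k * (x * Real.sin θ)^(2*k) / ((2*k).factorial : ℝ) := by
        simp_rw [← hcos]
    _ = ∑' k : ℕ, ∫ θ in Set.Ioc (0:ℝ) π, (-1:ℝ)^k * (x * Real.sin θ)^(2*k) / ((2*k).factorial : ℝ) :=
        key.symm
    _ = ∑' k : ℕ, π * ((-1:ℝ)^k / ((k.factorial : ℝ) * (k.factorial : ℝ)) * (x/2)^(2*k)) := by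
        exact tsum_congr fun k => bessel_term_integral x k
    _ = π * besselJ 0 x := by rw [tsum_mul_left, besselJ_zero]

lemma bessel_partial (x : ℝ) (n : ℕ) :
    (∫ θ in Set.Ioc (0:ℝ) π,
        ∑ k ∈ Finset.range n, (-1:ℝ)^k * (x * Real.sin θ)^(2*k) / ((2*k).factorial : ℝ))
      = π * ∑ k ∈ Finset.range n, (-1:ℝ)^k / ((k.factorial : ℝ) * (k.factorial : ℝ)) * (x/2)^(2*k) := by
  rw [MeasureTheory.integral_finset_sum _ (fun k _ => bessel_integrable x k)]
  rw [Finset.mul_sum]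
  exact Finset.sum_congr rfl fun k _ => bessel_term_integral x k

lemma abs_besselJ_le_one (x : ℝ) : |besselJ 0 x| ≤ 1 := by
  have h := bessel_rep x
  have hπ : (0:ℝ) < π := Real.pi_pos
  have hb : ‖∫ θ in Set.Ioc (0:ℝ) π, Real.cos (x * Real.sin θ)‖ ≤ 1 * (volume (Set.Ioc (0:ℝ) π)).toReal := by
    refine norm_setIntegral_le_of_norm_le_const ?_ (fun θ _ => ?_)
    · rw [Real.volume_Ioc]; exact ENNReal.ofReal_lt_top
    · exact (Real.abs_cos_le_one _)
  rw [h, Real.norm_eq_abs, abs_mul, abs_of_pos hπ] at hb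
  rw [Real.volume_Ioc, ENNReal.toReal_ofReal (by linarith), one_mul, sub_zero] at hb
  calc |besselJ 0 x| = (π * |besselJ 0 x|) / π := by field_simp
    _ ≤ π / π := by gcongr
    _ = 1 := by field_simp

lemma besselJ_remainder (x : ℝ) (hx : 0 ≤ x) (n : ℕ) :
    |besselJ 0 x - ∑ k ∈ Finset.range (n+1),
        (-1:ℝ)^k / ((k.factorial : ℝ) * (k.factorial : ℝ)) * (x/2)^(2*k)|
      ≤ x^(2*n+2) / ((2*n+2).factorial : ℝ) := by
  have hπ : (0:ℝ) < π := Real.pi_pos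
  have hrep := bessel_rep x
  have hpart := bessel_partial x (n+1)
  have hdiff : besselJ 0 x - ∑ k ∈ Finset.range (n+1),
      (-1:ℝ)^k / ((k.factorial : ℝ) * (k.factorial : ℝ)) * (x/2)^(2*k)
      = (1/π) * ∫ θ in Set.Ioc (0:ℝ) π,
          (Real.cos (x * Real.sin θ) -
            ∑ k ∈ Finset.range (n+1), (-1:ℝ)^k * (x * Real.sin θ)^(2*k) / ((2*k).factorial : ℝ)) := by
    rw [MeasureTheory.integral_sub ((show Continuous fun θ : ℝ => Real.cos (x * Real.sin θ) from
        Real.continuous_cos.comp (continuous_const.mul Real.continuous_sin)).integrableOn_Ioc)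
      (MeasureTheory.integrable_finset_sum _ (fun k _ => bessel_integrable x k))]
    rw [hrep, hpart, mul_sub]
    field_simp
  rw [hdiff, abs_mul, abs_of_pos (by positivity : (0:ℝ) < 1/π)]
  have hb : ‖∫ θ in Set.Ioc (0:ℝ) π,
      (Real.cos (x * Real.sin θ) -
        ∑ k ∈ Finset.range (n+1), (-1:ℝ)^k * (x * Real.sin θ)^(2*k) / ((2*k).factorial : ℝ))‖
      ≤ (x^(2*n+2) / ((2*n+2).factorial : ℝ)) * (volume (Set.Ioc (0:ℝ) π)).toReal := by
    refine norm_setIntegral_le_of_norm_le_const ?_ (fun θ hθ => ?_)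
    · rw [Real.volume_Ioc]; exact ENNReal.ofReal_lt_top
    · have hs : 0 ≤ Real.sin θ :=
        Real.sin_nonneg_of_nonneg_of_le_pi hθ.1.le hθ.2
      have hu : 0 ≤ x * Real.sin θ := mul_nonneg hx hs
      have h1 := (trig_tail_bound (n+1) (x * Real.sin θ) hu).1
      refine h1.trans ?_
      have h2 : (x * Real.sin θ)^(2*(n+1)) ≤ x^(2*(n+1)) := by
        refine pow_le_pow_left₀ hu ?_ _
        exact mul_le_of_le_one_right hx (Real.sin_le_one θ)
      have : (x * Real.sin θ)^(2*(n+1)) / ((2*(n+1)).factorial : ℝ)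
          ≤ x^(2*(n+1)) / ((2*(n+1)).factorial : ℝ) := by
        gcongr
      refine this.trans_eq ?_
      norm_num [show 2*(n+1) = 2*n+2 by ring]
  rw [Real.norm_eq_abs] at hb
  refine (mul_le_mul_of_nonneg_left hb (by positivity)).trans_eq ?_
  rw [Real.volume_Ioc, ENNReal.toReal_ofReal (by linarith), sub_zero]
  field_simp

lemma besselJ_continuous : Continuous (besselJ 0) := by
  have h : Continuous fun x : ℝ => ∫ θ in Set.Ioc (0:ℝ) π, Real.cos (x * Real.sin θ) := by
    refine continuous_of_dominated (bound := fun _ => 1) (fun x => ?_) (fun x => ?_) ?_ ?_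
    · exact (Real.continuous_cos.comp (continuous_const.mul Real.continuous_sin)).aestronglyMeasurable.restrict
    · filter_upwards with θ
      rw [Real.norm_eq_abs]
      exact Real.abs_cos_le_one _
    · refine MeasureTheory.integrableOn_const ?_
      rw [Real.volume_Ioc]; exact ENNReal.ofReal_ne_top
    · filter_upwards with θ
      exact Real.continuous_cos.comp (continuous_mul_right _)
  have heq : besselJ 0 = fun x => (1/π) * ∫ θ in Set.Ioc (0:ℝ) π, Real.cos (x * Real.sin θ) := by
    funext x
    rw [bessel_rep x]
    field_simp
  rw [heq]
  exact continuous_const.mul h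

lemma integrable_pow_exp {α : ℝ} (hα : 0 < α) (m : ℕ) :
    IntegrableOn (fun t : ℝ => t^m * Real.exp (-(t^α))) (Set.Ioi 0) := by
  have h := Real.GammaIntegral_convergent (s := ((m:ℝ)+1)/α) (by positivity)
  have h2 := (integrableOn_Ioi_comp_rpow_iff'
    (fun y : ℝ => Real.exp (-y) * y ^ (((m:ℝ)+1)/α - 1)) (ne_of_gt hα)).2 h
  refine h2.congr_fun (fun x hx => ?_) measurableSet_Ioi
  have hx0 : (0:ℝ) < x := hx
  have e1 : ((x:ℝ)^α) ^ (((m:ℝ)+1)/α - 1) = x ^ ((m:ℝ)+1-α) := by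
    rw [← Real.rpow_mul hx0.le]
    congr 1
    field_simp
  dsimp only
  rw [smul_eq_mul, e1]
  have e2 : x ^ (α - 1) * (Real.exp (-(x^α)) * x ^ ((m:ℝ)+1-α))
      = (x ^ (α-1) * x ^ ((m:ℝ)+1-α)) * Real.exp (-(x^α)) := by ring
  rw [e2, ← Real.rpow_add hx0]
  have e3 : α - 1 + ((m:ℝ)+1-α) = (m:ℝ) := by ring
  rw [e3, Real.rpow_natCast]

lemma pow_exp_integral {α : ℝ} (hα : 0 < α) (m : ℕ) :
    ∫ t in Set.Ioi (0:ℝ), t^m * Real.exp (-(t^α)) = (1/α) * Real.Gamma (((m:ℝ)+1)/α) := by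
  have h := integral_rpow_mul_exp_neg_rpow (p := α) (q := (m:ℝ)) hα
    (by have : (0:ℝ) ≤ m := Nat.cast_nonneg m; linarith)
  rw [← h]
  refine setIntegral_congr_fun measurableSet_Ioi (fun x hx => ?_)
  rw [Real.rpow_natCast]


/-- Expansion of the bivariate α-stable radial density at the origin with remainder bound:
`f(r;α) = (1/(2πα)) Σ_{k=0}^{n} (−1)^k Γ((2k+2)/α)/((2^k k!)²) r^{2k} + R(r;α)` with
`|R(r;α)| ≤ Γ((2n+4)/α)/(2πα (2n+2)!) r^{2n+2}` for all `r ≥ 0`. -/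
theorem bivariateStablePdf_taylor_expansion (α : ℝ) (hα : α ∈ Set.Ioo (0:ℝ) 2) (n : ℕ) :
    ∀ r : ℝ, 0 ≤ r →
      |bivariateStablePdf r α - (1 / (2 * π * α)) * ∑ k ∈ Finset.range (n + 1),
          (-1 : ℝ) ^ k * Real.Gamma ((2 * k + 2) / α) / ((2 ^ k * Nat.factorial k) ^ 2)
            * r ^ (2 * k)|
        ≤ Real.Gamma ((2 * n + 4) / α) / (2 * π * α * Nat.factorial (2 * n + 2))
            * r ^ (2 * n + 2) := by
  obtain ⟨hα0, -⟩ := hα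
  intro r hr
  have hπ : (0:ℝ) < π := Real.pi_pos
  set F : ℝ → ℝ := fun t => besselJ 0 (r * t) * t * Real.exp (-(t ^ α)) with hF
  set G : ℝ → ℝ := fun t => ∑ k ∈ Finset.range (n+1),
    ((-1:ℝ)^k / ((k.factorial:ℝ) * k.factorial) / 4^k * r^(2*k)) * (t^(2*k+1) * Real.exp (-(t^α)))
    with hG
  set E : ℝ → ℝ := fun t => (besselJ 0 (r*t) - ∑ k ∈ Finset.range (n+1),
    (-1:ℝ)^k / ((k.factorial:ℝ) * k.factorial) * ((r*t)/2)^(2*k)) * t * Real.exp (-(t^α)) with hE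
  have hterm : ∀ (t : ℝ) (k : ℕ),
      ((-1:ℝ)^k / ((k.factorial:ℝ) * k.factorial) / 4^k * r^(2*k)) * (t^(2*k+1) * Real.exp (-(t^α)))
      = ((-1:ℝ)^k / ((k.factorial:ℝ) * k.factorial) * ((r*t)/2)^(2*k)) * (t * Real.exp (-(t^α))) := by
    intro t k
    have h1 : ((r*t)/2)^(2*k) = r^(2*k) * t^(2*k) / 4^k := by
      rw [div_pow, mul_pow, pow_mul]
      norm_num [pow_mul]
    rw [h1, pow_succ]
    ring
  have key : ∀ t : ℝ, F t = G t + E t := by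
    intro t
    rw [hF, hG, hE]
    simp only
    rw [Finset.sum_congr rfl (fun k _ => hterm t k), ← Finset.sum_mul]
    ring
  have hexp_cont : Continuous fun t : ℝ => Real.exp (-(t^α)) := by
    refine Real.continuous_exp.comp (Continuous.neg ?_)
    refine continuous_iff_continuousAt.2 (fun x => ?_)
    exact Real.continuousAt_rpow_const x α (Or.inr hα0.le)
  have hF_cont : Continuous F := by
    exact ((besselJ_continuous.comp (continuous_const.mul continuous_id)).mul
      continuous_id).mul hexp_cont
  have hF_int : IntegrableOn F (Set.Ioi 0) := by
    refine Integrable.mono' ((integrable_pow_exp hα0 1)) hF_cont.aestronglyMeasurable.restrict ?_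
    filter_upwards [ae_restrict_mem measurableSet_Ioi] with t ht
    have ht0 : (0:ℝ) < t := ht
    have h1 : ‖F t‖ = |besselJ 0 (r*t)| * (t * Real.exp (-(t^α))) := by
      rw [hF, Real.norm_eq_abs]
      simp only
      rw [abs_mul, abs_mul, abs_of_pos ht0, abs_of_pos (Real.exp_pos _), mul_assoc]
    rw [h1, pow_one]
    calc |besselJ 0 (r*t)| * (t * Real.exp (-(t^α))) ≤ 1 * (t * Real.exp (-(t^α))) := by
          refine mul_le_mul_of_nonneg_right (abs_besselJ_le_one _) (by positivity)
      _ = t * Real.exp (-(t^α)) := by ring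
  have hGk_int : ∀ k : ℕ, IntegrableOn (fun t : ℝ =>
      ((-1:ℝ)^k / ((k.factorial:ℝ) * k.factorial) / 4^k * r^(2*k)) * (t^(2*k+1) * Real.exp (-(t^α))))
      (Set.Ioi 0) := fun k => (integrable_pow_exp hα0 (2*k+1)).const_mul _
  have hG_int : IntegrableOn G (Set.Ioi 0) :=
    MeasureTheory.integrable_finset_sum _ (fun k _ => hGk_int k)
  have hE_int : IntegrableOn E (Set.Ioi 0) := by
    have : E = fun t => F t - G t := by
      funext t
      rw [key t]
      ring
    rw [this]
    exact hF_int.sub hG_int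
  have hG_val : ∫ t in Set.Ioi (0:ℝ), G t
      = ∑ k ∈ Finset.range (n+1), ((-1:ℝ)^k / ((k.factorial:ℝ) * k.factorial) / 4^k * r^(2*k))
        * ((1/α) * Real.Gamma ((2*(k:ℝ)+2)/α)) := by
    rw [hG, MeasureTheory.integral_finset_sum _ (fun k _ => hGk_int k)]
    refine Finset.sum_congr rfl (fun k _ => ?_)
    rw [MeasureTheory.integral_const_mul, pow_exp_integral hα0 (2*k+1)]
    have : ((2*k+1:ℕ):ℝ) + 1 = 2*(k:ℝ)+2 := by push_cast; ring
    rw [this]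
  have hsplit : ∫ t in Set.Ioi (0:ℝ), F t = (∫ t in Set.Ioi (0:ℝ), G t) + ∫ t in Set.Ioi (0:ℝ), E t := by
    rw [← MeasureTheory.integral_add hG_int hE_int]
    exact setIntegral_congr_fun measurableSet_Ioi (fun t _ => key t)
  have hsum_eq : (1 / (2 * π)) * ∫ t in Set.Ioi (0:ℝ), G t
      = (1 / (2 * π * α)) * ∑ k ∈ Finset.range (n + 1),
          (-1 : ℝ) ^ k * Real.Gamma ((2 * k + 2) / α) / ((2 ^ k * Nat.factorial k) ^ 2) * r ^ (2 * k) := by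
    rw [hG_val, Finset.mul_sum, Finset.mul_sum]
    refine Finset.sum_congr rfl (fun k _ => ?_)
    have hk : ((k.factorial:ℝ)) ≠ 0 := Nat.cast_ne_zero.2 (Nat.factorial_ne_zero _)
    have h2k : ((2:ℝ)^k) ≠ 0 := by positivity
    have h4k : ((4:ℝ)^k) ≠ 0 := by positivity
    have h44 : ((4:ℝ)^k) = ((2:ℝ)^k)^2 := by
      rw [show (4:ℝ) = 2^2 by norm_num, ← pow_mul, mul_comm, pow_mul]
    rw [h44]
    field_simp
  have hmain : bivariateStablePdf r α - (1 / (2 * π * α)) * ∑ k ∈ Finset.range (n + 1),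
      (-1 : ℝ) ^ k * Real.Gamma ((2 * k + 2) / α) / ((2 ^ k * Nat.factorial k) ^ 2) * r ^ (2 * k)
      = (1 / (2 * π)) * ∫ t in Set.Ioi (0:ℝ), E t := by
    rw [bivariateStablePdf, ← hsum_eq, hsplit]
    ring
  rw [hmain]
  have hbound : ‖∫ t in Set.Ioi (0:ℝ), E t‖
      ≤ ∫ t in Set.Ioi (0:ℝ), (r^(2*n+2) / ((2*n+2).factorial : ℝ)) * (t^(2*n+3) * Real.exp (-(t^α))) := by
    refine MeasureTheory.norm_integral_le_of_norm_le ((integrable_pow_exp hα0 (2*n+3)).const_mul _) ?_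
    filter_upwards [ae_restrict_mem measurableSet_Ioi] with t ht
    have ht0 : (0:ℝ) < t := ht
    have hrt : 0 ≤ r * t := mul_nonneg hr ht0.le
    have h1 : ‖E t‖ = |besselJ 0 (r*t) - ∑ k ∈ Finset.range (n+1),
        (-1:ℝ)^k / ((k.factorial:ℝ) * k.factorial) * ((r*t)/2)^(2*k)| * (t * Real.exp (-(t^α))) := by
      rw [hE, Real.norm_eq_abs]
      simp only
      rw [abs_mul, abs_mul, abs_of_pos ht0, abs_of_pos (Real.exp_pos _), mul_assoc]
    rw [h1]
    have h2 := besselJ_remainder (r*t) hrt n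
    calc |besselJ 0 (r*t) - ∑ k ∈ Finset.range (n+1),
          (-1:ℝ)^k / ((k.factorial:ℝ) * k.factorial) * ((r*t)/2)^(2*k)| * (t * Real.exp (-(t^α)))
        ≤ ((r*t)^(2*n+2) / ((2*n+2).factorial : ℝ)) * (t * Real.exp (-(t^α))) := by
          refine mul_le_mul_of_nonneg_right h2 (by positivity)
      _ = (r^(2*n+2) / ((2*n+2).factorial : ℝ)) * (t^(2*n+3) * Real.exp (-(t^α))) := by
          rw [mul_pow, show 2*n+3 = (2*n+2)+1 by ring, pow_succ]
          ring
  have hval : ∫ t in Set.Ioi (0:ℝ), (r^(2*n+2) / ((2*n+2).factorial : ℝ)) * (t^(2*n+3) * Real.exp (-(t^α)))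
      = (r^(2*n+2) / ((2*n+2).factorial : ℝ)) * ((1/α) * Real.Gamma ((2*(n:ℝ)+4)/α)) := by
    rw [MeasureTheory.integral_const_mul, pow_exp_integral hα0 (2*n+3)]
    have : ((2*n+3:ℕ):ℝ) + 1 = 2*(n:ℝ)+4 := by push_cast; ring
    rw [this]
  rw [abs_mul, abs_of_pos (by positivity : (0:ℝ) < 1/(2*π))]
  rw [Real.norm_eq_abs] at hbound
  calc (1/(2*π)) * |∫ t in Set.Ioi (0:ℝ), E t|
      ≤ (1/(2*π)) * ((r^(2*n+2) / ((2*n+2).factorial : ℝ)) * ((1/α) * Real.Gamma ((2*(n:ℝ)+4)/α))) := by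
        refine mul_le_mul_of_nonneg_left (hbound.trans_eq hval) (by positivity)
    _ = Real.Gamma ((2 * n + 4) / α) / (2 * π * α * Nat.factorial (2 * n + 2)) * r ^ (2 * n + 2) := by
        ring
end

section
/- For ℓ₁, ℓ₂ ∈ ℕ, α ∈ (0,2) and r ≥ 0, the mixed partial derivative of the symmetric α-stable density satisfies |∂^{ℓ₁+ℓ₂} f/(∂r^{ℓ₁} ∂α^{ℓ₂})(r;α)| ≤ (1/(π α^{ℓ₂+1})) ∫₀^∞ |log t|^{ℓ₂} t^{(ℓ₁+1)/α − 1} |p_{ℓ₂}(t)| e^{−t} dt, where p_{ℓ₂} is the polynomial of degree ℓ₂ defined by ∂^{ℓ₂}/∂α^{ℓ₂} [e^{−t^α}] = (log t)^{ℓ₂} p_{ℓ₂}(t^α) e^{−t^α} (with p₀ ≡ 1); in particular the right-hand side is finite. -/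
open MeasureTheory Real

section Helpers
open Set Filter Metric

/-! ### Polynomials `qpoly` describing the α-derivatives of `exp (-(t^α))` -/

noncomputable def qpoly : ℕ → Polynomial ℝ
  | 0 => 1
  | (k + 1) => Polynomial.X * ((qpoly k).derivative - qpoly k)

lemma qpoly_hasDerivAt (k : ℕ) {t : ℝ} (ht : 0 < t) (β : ℝ) :
    HasDerivAt (fun b => Real.log t ^ k * (qpoly k).eval (t ^ b) * Real.exp (-(t ^ b)))
      (Real.log t ^ (k + 1) * (qpoly (k + 1)).eval (t ^ β) * Real.exp (-(t ^ β))) β := by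
  have h1 : HasDerivAt (fun b : ℝ => t ^ b) (t ^ β * Real.log t) β :=
    (Real.hasStrictDerivAt_const_rpow ht β).hasDerivAt
  have h2 : HasDerivAt (fun b : ℝ => (qpoly k).eval (t ^ b))
      ((qpoly k).derivative.eval (t ^ β) * (t ^ β * Real.log t)) β :=
    ((qpoly k).hasDerivAt (t ^ β)).comp β h1
  have h3 : HasDerivAt (fun b : ℝ => Real.exp (-(t ^ b)))
      (Real.exp (-(t ^ β)) * -(t ^ β * Real.log t)) β :=
    (Real.hasDerivAt_exp _).comp β h1.neg
  have h4 := (h2.const_mul (Real.log t ^ k)).mul h3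
  refine h4.congr_deriv ?_
  simp [qpoly, Polynomial.eval_mul, Polynomial.eval_sub]
  ring

lemma iteratedDeriv_exp_rpow (k : ℕ) {t : ℝ} (ht : 0 < t) (β : ℝ) :
    iteratedDeriv k (fun b => Real.exp (-(t ^ b))) β
      = Real.log t ^ k * (qpoly k).eval (t ^ β) * Real.exp (-(t ^ β)) := by
  induction k generalizing β with
  | zero => simp [qpoly]
  | succ k ih =>
    rw [iteratedDeriv_succ]
    have : deriv (iteratedDeriv k fun b => Real.exp (-(t ^ b))) β
        = deriv (fun b => Real.log t ^ k * (qpoly k).eval (t ^ b) * Real.exp (-(t ^ b))) β := by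
      congr 1
      funext b
      exact ih b
    rw [this, (qpoly_hasDerivAt k ht β).deriv]

lemma qpoly_unique (ℓ₂ : ℕ) (p : Polynomial ℝ)
    (h : ∀ t : ℝ, 0 < t → t ≠ 1 →
      Real.log t ^ ℓ₂ * p.eval t * Real.exp (-t)
        = Real.log t ^ ℓ₂ * (qpoly ℓ₂).eval t * Real.exp (-t)) :
    p = qpoly ℓ₂ := by
  apply Polynomial.eq_of_infinite_eval_eq
  apply Set.Infinite.mono (s := Set.Ioi (1:ℝ)) _ (Set.Ioi_infinite 1)
  intro t ht
  have ht1 : (1:ℝ) < t := ht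
  have hlog : Real.log t ≠ 0 := by
    simp only [ne_eq, Real.log_eq_zero]
    push_neg
    refine ⟨by linarith, by linarith, by linarith⟩
  have heq := h t (by linarith) (by linarith)
  have hpow : Real.log t ^ ℓ₂ ≠ 0 := pow_ne_zero _ hlog
  have hexp : Real.exp (-t) ≠ 0 := Real.exp_ne_zero _
  have h1 := mul_right_cancel₀ hexp heq
  exact mul_left_cancel₀ hpow h1

/-! ### A polynomial growth bound -/

lemma poly_exp_bound (q : Polynomial ℝ) :
    ∃ C : ℝ, 0 ≤ C ∧ ∀ u : ℝ, 0 ≤ u → |q.eval u| * Real.exp (-u) ≤ C * Real.exp (-(2⁻¹ * u)) := by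
  have h2 : Filter.Tendsto
      (fun u : ℝ => (q.comp (Polynomial.C 2 * Polynomial.X)).eval u / Real.exp u)
      Filter.atTop (nhds 0) := Polynomial.tendsto_div_exp_atTop _
  have h3 : Filter.Tendsto (fun u : ℝ => q.eval u / Real.exp (2⁻¹ * u))
      Filter.atTop (nhds 0) := by
    have hmono := Filter.tendsto_atTop_atTop_of_monotone (f := fun u : ℝ => 2⁻¹ * u)
      (fun a b hab => by nlinarith) (fun b => ⟨2 * b, by nlinarith⟩)
    have := h2.comp hmono
    convert this using 2 with u
    simp [Function.comp, Polynomial.eval_comp]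
  have h4 : ∀ᶠ u in Filter.atTop, |q.eval u / Real.exp (2⁻¹ * u)| ≤ 1 := by
    have h5 : Filter.Tendsto (fun u : ℝ => |q.eval u / Real.exp (2⁻¹ * u)|)
        Filter.atTop (nhds 0) := by simpa using h3.abs
    exact h5.eventually_le_const (by norm_num : (0:ℝ) < 1)
  obtain ⟨N, hN⟩ := Filter.eventually_atTop.1 h4
  have hcont : Continuous fun u : ℝ => q.eval u / Real.exp (2⁻¹ * u) :=
    (Polynomial.continuous q).div
      (Real.continuous_exp.comp (continuous_const.mul continuous_id))
      (fun u => Real.exp_ne_zero _)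
  obtain ⟨M, hM⟩ := (isCompact_Icc (a := (0:ℝ)) (b := max N 0)).exists_bound_of_continuousOn
    hcont.continuousOn
  refine ⟨max M 1, le_trans zero_le_one (le_max_right _ _), fun u hu => ?_⟩
  have key : |q.eval u / Real.exp (2⁻¹ * u)| ≤ max M 1 := by
    rcases le_or_gt u (max N 0) with h | h
    · exact le_trans (hM u ⟨hu, h⟩) (le_max_left _ _)
    · exact le_trans (hN u (le_of_lt (lt_of_le_of_lt (le_max_left _ _) h))) (le_max_right _ _)
  rw [abs_div, abs_of_pos (Real.exp_pos _), div_le_iff₀ (Real.exp_pos _)] at key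
  calc |q.eval u| * Real.exp (-u) ≤ (max M 1 * Real.exp (2⁻¹ * u)) * Real.exp (-u) := by
        apply mul_le_mul_of_nonneg_right key (le_of_lt (Real.exp_pos _))
    _ = max M 1 * Real.exp (-(2⁻¹ * u)) := by
        rw [mul_assoc, ← Real.exp_add]; ring_nf

/-! ### Integrability lemmas -/

lemma contOn_aux (k : ℕ) (σ c a : ℝ) :
    ContinuousOn (fun x : ℝ => |Real.log x| ^ k * x ^ σ * Real.exp (-(c * x ^ a)))
      (Set.Ioi (0:ℝ)) := by
  have hlog : ContinuousOn (fun x : ℝ => Real.log x) (Set.Ioi 0) :=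
    Real.continuousOn_log.mono (fun x hx => ne_of_gt hx)
  have hrpow : ∀ b : ℝ, ContinuousOn (fun x : ℝ => x ^ b) (Set.Ioi (0:ℝ)) := fun b =>
    ContinuousOn.rpow_const continuousOn_id (fun x hx => Or.inl (ne_of_gt hx))
  exact (((hlog.abs.pow k).mul (hrpow σ)).mul
    (Real.continuous_exp.comp_continuousOn ((continuousOn_const.mul (hrpow a)).neg)))

lemma lemB (k : ℕ) {σ c : ℝ} (hσ : -1 < σ) (hc : 0 < c) :
    IntegrableOn (fun x : ℝ => |Real.log x| ^ k * x ^ σ * Real.exp (-(c * x)))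
      (Set.Ioi (0:ℝ)) := by
  have hmeas : AEStronglyMeasurable (fun x : ℝ => |Real.log x| ^ k * x ^ σ * Real.exp (-(c * x)))
      (volume.restrict (Set.Ioi (0:ℝ))) := by
    refine (ContinuousOn.aestronglyMeasurable ?_ measurableSet_Ioi)
    exact ((contOn_aux k σ c 1).congr (fun y hy => by simp only [Real.rpow_one]))
  rw [← Set.Ioc_union_Ioi_eq_Ioi (zero_le_one)]
  rw [IntegrableOn, Measure.restrict_union (Set.Ioc_disjoint_Ioi le_rfl) measurableSet_Ioi,
    integrable_add_measure]
  constructor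
  · set ε : ℝ := (σ + 1) / 2 with hε
    have hε0 : 0 < ε := by simp only [hε]; linarith
    have hint : IntegrableOn (fun x : ℝ => ((k:ℝ)/ε) ^ k * x ^ ((σ - 1)/2))
        (Set.Ioc (0:ℝ) 1) := by
      apply Integrable.const_mul
      have h := intervalIntegral.intervalIntegrable_rpow' (a := 0) (b := 1)
        (show (-1:ℝ) < (σ-1)/2 by linarith)
      rw [intervalIntegrable_iff_integrableOn_Ioc_of_le zero_le_one] at h
      exact h
    apply hint.mono' (hmeas.mono_measure (Measure.restrict_mono (by
      intro x hx; exact hx.1) le_rfl))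
    rw [ae_restrict_iff' measurableSet_Ioc]
    refine Filter.Eventually.of_forall (fun x hx => ?_)
    obtain ⟨hx0, hx1⟩ := hx
    have hkey : |Real.log x| ^ k ≤ ((k:ℝ)/ε) ^ k * x ^ (-ε) := by
      rcases Nat.eq_zero_or_pos k with hk | hk
      · subst hk
        have := Real.rpow_le_rpow_of_exponent_ge hx0 hx1 (show -ε ≤ (0:ℝ) by linarith)
        simpa using this
      · have hk0 : (0:ℝ) < (k:ℝ) := by exact_mod_cast hk
        have hek : 0 < ε / (k:ℝ) := by positivity
        have h2 : Real.log x⁻¹ ≤ (x⁻¹ ^ (ε/(k:ℝ))) / (ε/(k:ℝ)) :=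
          Real.log_le_rpow_div (by positivity) hek
        have hlx : |Real.log x| = Real.log x⁻¹ := by
          rw [Real.log_inv, abs_of_nonpos (Real.log_nonpos (le_of_lt hx0) hx1)]
        have h3 : |Real.log x| ≤ ((k:ℝ)/ε) * x ^ (-(ε/(k:ℝ))) := by
          rw [hlx]
          calc Real.log x⁻¹ ≤ (x⁻¹ ^ (ε/(k:ℝ))) / (ε/(k:ℝ)) := h2
            _ = ((k:ℝ)/ε) * x ^ (-(ε/(k:ℝ))) := by
                rw [← Real.rpow_neg_one x, ← Real.rpow_mul (le_of_lt hx0)]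
                have hee : (-1) * (ε/(k:ℝ)) = -(ε/(k:ℝ)) := by ring
                rw [hee, div_eq_mul_inv, inv_div, mul_comm]
        calc |Real.log x| ^ k ≤ (((k:ℝ)/ε) * x ^ (-(ε/(k:ℝ)))) ^ k :=
              pow_le_pow_left₀ (abs_nonneg _) h3 k
          _ = ((k:ℝ)/ε) ^ k * x ^ (-ε) := by
              rw [mul_pow, ← Real.rpow_natCast (x ^ (-(ε/(k:ℝ)))) k,
                ← Real.rpow_mul (le_of_lt hx0)]
              congr 2
              field_simp
    rw [Real.norm_eq_abs, abs_of_nonneg (by positivity)]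
    have hexp1 : Real.exp (-(c * x)) ≤ 1 := by
      rw [Real.exp_le_one_iff]; nlinarith
    calc |Real.log x| ^ k * x ^ σ * Real.exp (-(c * x))
        ≤ (((k:ℝ)/ε) ^ k * x ^ (-ε)) * x ^ σ * 1 := by
          apply mul_le_mul (mul_le_mul_of_nonneg_right hkey (by positivity)) hexp1
            (le_of_lt (Real.exp_pos _)) (by positivity)
      _ = ((k:ℝ)/ε) ^ k * x ^ ((σ - 1)/2) := by
          rw [mul_one, mul_assoc, ← Real.rpow_add hx0]
          congr 2
          simp only [hε]; ring
  · have hint : IntegrableOn (fun x : ℝ => x ^ (σ + k) * Real.exp (-c * x ^ (1:ℝ)))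
        (Set.Ioi (0:ℝ)) :=
      integrableOn_rpow_mul_exp_neg_mul_rpow (by linarith [Nat.cast_nonneg (α := ℝ) k]) zero_lt_one hc
    apply ((hint.mono_set (Set.Ioi_subset_Ioi zero_le_one))).mono'
      (hmeas.mono_measure (Measure.restrict_mono (Set.Ioi_subset_Ioi zero_le_one) le_rfl))
    rw [ae_restrict_iff' measurableSet_Ioi]
    refine Filter.Eventually.of_forall (fun x hx => ?_)
    have hx1 : (1:ℝ) ≤ x := le_of_lt hx
    have hx0 : (0:ℝ) < x := lt_of_lt_of_le zero_lt_one hx1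
    have hlg : |Real.log x| ≤ x := by
      rw [abs_of_nonneg (Real.log_nonneg hx1)]
      linarith [Real.log_le_sub_one_of_pos hx0]
    have h1 : |Real.log x| ^ k ≤ x ^ (k:ℝ) := by
      rw [Real.rpow_natCast]
      exact pow_le_pow_left₀ (abs_nonneg _) hlg k
    rw [Real.norm_eq_abs, abs_of_nonneg (by positivity), Real.rpow_one]
    calc |Real.log x| ^ k * x ^ σ * Real.exp (-(c * x))
        ≤ x ^ (k:ℝ) * x ^ σ * Real.exp (-(c*x)) := by
          apply mul_le_mul_of_nonneg_right (mul_le_mul_of_nonneg_right h1 (by positivity))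
            (le_of_lt (Real.exp_pos _))
      _ = x ^ (σ + k) * Real.exp (-c * x) := by
          rw [← Real.rpow_add hx0]; ring_nf

lemma lemA (k : ℕ) {σ c a : ℝ} (hσ : -1 < σ) (hc : 0 < c) (ha : 0 < a) :
    IntegrableOn (fun x : ℝ => |Real.log x| ^ k * x ^ σ * Real.exp (-(c * x ^ a)))
      (Set.Ioi (0:ℝ)) := by
  have hinv : (1/a : ℝ) ≠ 0 := by positivity
  rw [← integrableOn_Ioi_comp_rpow_iff _ hinv]
  have hmeas : AEStronglyMeasurable
      (fun x : ℝ => (|1/a| * x ^ (1/a - 1)) •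
        (|Real.log (x ^ (1/a))| ^ k * (x ^ (1/a)) ^ σ * Real.exp (-(c * (x ^ (1/a)) ^ a))))
      (volume.restrict (Set.Ioi (0:ℝ))) := by
    refine ContinuousOn.aestronglyMeasurable ?_ measurableSet_Ioi
    have hr : ∀ b : ℝ, ContinuousOn (fun x : ℝ => x ^ b) (Set.Ioi (0:ℝ)) := fun b =>
      ContinuousOn.rpow_const continuousOn_id (fun x hx => Or.inl (ne_of_gt hx))
    have hx1a : ∀ x ∈ Set.Ioi (0:ℝ), (0:ℝ) < x ^ (1/a:ℝ) := fun x hx =>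
      Real.rpow_pos_of_pos hx _
    exact (continuousOn_const.mul (hr _)).smul
      ((contOn_aux k σ c a).comp (hr (1/a)) (fun x hx => hx1a x hx))
  have hint := lemB k (σ := (σ+1)/a - 1) (c := c)
    (by have h0 : (0:ℝ) < (σ+1)/a := div_pos (by linarith) ha
        linarith) hc
  apply Integrable.mono' (hint.const_mul ((1/a) * (1/a)^k)) hmeas
  rw [ae_restrict_iff' measurableSet_Ioi]
  refine Filter.Eventually.of_forall (fun x hx => ?_)
  have hx0 : (0:ℝ) < x := hx
  have hxa : (0:ℝ) < x ^ (1/a:ℝ) := Real.rpow_pos_of_pos hx0 _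
  have hlog : Real.log (x ^ (1/a:ℝ)) = (1/a) * Real.log x := Real.log_rpow hx0 _
  have hpow : (x ^ (1/a:ℝ)) ^ a = x := by
    rw [← Real.rpow_mul (le_of_lt hx0)]
    rw [one_div, inv_mul_cancel₀ (ne_of_gt ha), Real.rpow_one]
  have hps : (x ^ (1/a:ℝ)) ^ σ = x ^ (σ/a) := by
    rw [← Real.rpow_mul (le_of_lt hx0)]
    congr 1; ring
  rw [Real.norm_eq_abs, smul_eq_mul, hlog, hpow, hps]
  rw [abs_of_nonneg (by positivity : (0:ℝ) ≤ |1/a| * x ^ (1/a - 1) *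
    (|(1/a) * Real.log x| ^ k * x ^ (σ/a) * Real.exp (-(c * x))))]
  have h1a : |(1/a : ℝ)| = 1/a := abs_of_pos (by positivity)
  rw [abs_mul (1/a) (Real.log x), h1a, mul_pow]
  apply le_of_eq
  rw [show (σ+1)/a - 1 = (1/a - 1) + σ/a by ring, Real.rpow_add hx0]
  ring

lemma integrableOn_of_bound (f bound : ℝ → ℝ)
    (hmeas : AEStronglyMeasurable f (volume.restrict (Set.Ioi (0:ℝ))))
    (hint : IntegrableOn bound (Set.Ioi (0:ℝ)))
    (hb : ∀ t ∈ Set.Ioi (0:ℝ), |f t| ≤ bound t) :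
    IntegrableOn f (Set.Ioi (0:ℝ)) := by
  apply hint.mono' hmeas
  rw [ae_restrict_iff' measurableSet_Ioi]
  exact Filter.Eventually.of_forall hb

/-! ### Iterated differentiation under the integral sign -/

lemma iteratedDeriv_param (F : ℕ → ℝ → ℝ → ℝ) {s : Set ℝ} (hs : IsOpen s) (n : ℕ)
    (hmeas : ∀ k ≤ n, ∀ x ∈ s, AEStronglyMeasurable (F k x) (volume.restrict (Set.Ioi (0:ℝ))))
    (hbound : ∀ k ≤ n, ∃ bound : ℝ → ℝ, IntegrableOn bound (Set.Ioi (0:ℝ)) ∧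
      ∀ x ∈ s, ∀ t ∈ Set.Ioi (0:ℝ), |F k x t| ≤ bound t)
    (hderiv : ∀ k < n, ∀ x ∈ s, ∀ t ∈ Set.Ioi (0:ℝ),
      HasDerivAt (fun y => F k y t) (F (k+1) x t) x) :
    ∀ x ∈ s, iteratedDeriv n (fun y => ∫ t in Set.Ioi (0:ℝ), F 0 y t) x
      = ∫ t in Set.Ioi (0:ℝ), F n x t := by
  have hint : ∀ k ≤ n, ∀ x ∈ s, IntegrableOn (F k x) (Set.Ioi (0:ℝ)) := by
    intro k hk x hx
    obtain ⟨bound, hbi, hbb⟩ := hbound k hk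
    exact integrableOn_of_bound _ _ (hmeas k hk x hx) hbi (fun t ht => hbb x hx t ht)
  have hDeriv : ∀ k, k < n → ∀ x ∈ s,
      HasDerivAt (fun y => ∫ t in Set.Ioi (0:ℝ), F k y t)
        (∫ t in Set.Ioi (0:ℝ), F (k+1) x t) x := by
    intro k hk x hx
    obtain ⟨ε, hε, hball⟩ := Metric.isOpen_iff.1 hs x hx
    obtain ⟨bound, hbi, hbb⟩ := hbound (k+1) hk
    have h := hasDerivAt_integral_of_dominated_loc_of_deriv_le (F := fun y t => F k y t)
      (F' := fun y t => F (k+1) y t) (μ := volume.restrict (Set.Ioi (0:ℝ)))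
      (bound := bound) (x₀ := x) (Metric.ball_mem_nhds x hε)
      ?_ (hint k (le_of_lt hk) x hx) (hmeas (k+1) hk x hx) ?_ hbi ?_
    · exact h.2
    · filter_upwards [hs.mem_nhds hx] with y hy
      exact hmeas k (le_of_lt hk) y hy
    · rw [ae_restrict_iff' measurableSet_Ioi]
      refine Filter.Eventually.of_forall (fun t ht y hy => ?_)
      rw [Real.norm_eq_abs]
      exact hbb y (hball hy) t ht
    · rw [ae_restrict_iff' measurableSet_Ioi]
      refine Filter.Eventually.of_forall (fun t ht y hy => ?_)
      exact hderiv k hk y (hball hy) t ht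
  have main : ∀ m, m ≤ n → ∀ x ∈ s,
      iteratedDeriv m (fun y => ∫ t in Set.Ioi (0:ℝ), F 0 y t) x
        = ∫ t in Set.Ioi (0:ℝ), F m x t := by
    intro m
    induction m with
    | zero => intro _ x hx; simp
    | succ m ih =>
      intro hm x hx
      rw [iteratedDeriv_succ]
      have heq : deriv (iteratedDeriv m (fun y => ∫ t in Set.Ioi (0:ℝ), F 0 y t)) x
          = deriv (fun y => ∫ t in Set.Ioi (0:ℝ), F m y t) x := by
        apply Filter.EventuallyEq.deriv_eq
        filter_upwards [hs.mem_nhds hx] with y hy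
        exact ih (le_of_lt (Nat.lt_of_succ_le hm)) y hy
      rw [heq]
      exact (hDeriv m (Nat.lt_of_succ_le hm) x hx).deriv
  exact main n le_rfl

lemma exp_rpow_contOn {β : ℝ} :
    ContinuousOn (fun t : ℝ => Real.exp (-(t ^ β))) (Set.Ioi (0:ℝ)) :=
  Real.continuous_exp.comp_continuousOn
    ((ContinuousOn.rpow_const continuousOn_id (fun x hx => Or.inl (ne_of_gt hx))).neg)

end Helpers

/-- The unit-scale symmetric α-stable density `f(r;α) = (1/π)∫₀^∞ cos(rt) e^{-t^α} dt`. -/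
noncomputable def stablePdf (r α : ℝ) : ℝ :=
  (1 / π) * ∫ t in Set.Ioi (0:ℝ), Real.cos (r * t) * Real.exp (-(t ^ α))

section Stages
open Set Filter Metric

lemma stage1 {β : ℝ} (hβ : β ∈ Set.Ioo (0:ℝ) 2) (ℓ₁ : ℕ) (r' : ℝ) :
    iteratedDeriv ℓ₁ (fun u => stablePdf u β) r'
      = ∫ t in Set.Ioi (0:ℝ),
          (1/π) * (Real.cos (r'*t + ℓ₁*(π/2)) * t^ℓ₁ * Real.exp (-(t^β))) := by
  obtain ⟨hβ0, hβ2⟩ := hβ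
  set F : ℕ → ℝ → ℝ → ℝ := fun k y t =>
    (1/π) * (Real.cos (y*t + k*(π/2)) * t^k * Real.exp (-(t^β))) with hF
  have key := iteratedDeriv_param F isOpen_univ ℓ₁ ?_ ?_ ?_ r' (Set.mem_univ _)
  · rw [← key]
    congr 1
    funext u
    rw [stablePdf, ← MeasureTheory.integral_const_mul]
    congr 1
    funext t
    simp [hF]
  · intro k hk x hx
    refine ContinuousOn.aestronglyMeasurable ?_ measurableSet_Ioi
    have h1 : Continuous (fun t : ℝ => Real.cos (x*t + k*(π/2))) := by fun_prop
    have h2 : Continuous (fun t : ℝ => t ^ k) := continuous_pow k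
    exact continuousOn_const.mul
      (((h1.continuousOn.mul h2.continuousOn)).mul exp_rpow_contOn)
  · intro k hk
    have hσ : (-1:ℝ) < (k:ℝ) := by
      have := Nat.cast_nonneg (α := ℝ) k; linarith
    refine ⟨fun t => (1/π) * (|Real.log t| ^ 0 * t ^ (k:ℝ) * Real.exp (-(1 * t^β))),
      (lemA 0 hσ one_pos hβ0).const_mul _, ?_⟩
    intro x hx t ht
    have ht0 : (0:ℝ) < t := ht
    rw [hF]
    simp only [pow_zero, one_mul, abs_mul, abs_mul]
    rw [abs_of_pos (show (0:ℝ) < 1/π by positivity), Real.rpow_natCast]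
    rw [abs_of_pos (Real.exp_pos _), abs_of_pos (pow_pos ht0 k)]
    have : |Real.cos (x*t + k*(π/2))| ≤ 1 := Real.abs_cos_le_one _
    calc 1/π * (|Real.cos (x*t + k*(π/2))| * t^k * Real.exp (-(t^β)))
        ≤ 1/π * (1 * t^k * Real.exp (-(t^β))) := by
          apply mul_le_mul_of_nonneg_left _ (by positivity)
          apply mul_le_mul_of_nonneg_right (mul_le_mul_of_nonneg_right this (by positivity))
            (le_of_lt (Real.exp_pos _))
      _ = 1/π * (t^k * Real.exp (-(t^β))) := by ring
  · intro k hk x hx t ht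
    have hc : HasDerivAt (fun y : ℝ => Real.cos (y*t + k*(π/2)))
        (-Real.sin (x*t + k*(π/2)) * t) x := by
      have := (Real.hasDerivAt_cos (x*t + k*(π/2))).comp x
        (((hasDerivAt_id x).mul_const t).add_const ((k:ℝ)*(π/2)))
      simpa [Function.comp_def] using this
    have h := ((hc.mul_const ((t:ℝ)^k)).mul_const (Real.exp (-(t^β)))).const_mul (1/π : ℝ)
    refine h.congr_deriv ?_
    have hang : ((k+1:ℕ):ℝ)*(π/2) = (k:ℝ)*(π/2) + π/2 := by push_cast; ring
    rw [hF]
    simp only []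
    rw [hang, ← add_assoc, Real.cos_add_pi_div_two]
    ring

lemma stage2 (ℓ₁ ℓ₂ : ℕ) {α : ℝ} (hα : α ∈ Set.Ioo (0:ℝ) 2) (r : ℝ) :
    iteratedDeriv ℓ₂ (fun b => iteratedDeriv ℓ₁ (fun s => stablePdf s b) r) α
      = ∫ t in Set.Ioi (0:ℝ), (1/π) * (Real.cos (r*t + ℓ₁*(π/2)) * t^ℓ₁) *
          (Real.log t ^ ℓ₂ * (qpoly ℓ₂).eval (t^α) * Real.exp (-(t^α))) := by
  obtain ⟨hα0, hα2⟩ := hα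
  set s₂ : Set ℝ := Set.Ioo (α/2) ((α+2)/2) with hs₂
  have hs₂open : IsOpen s₂ := isOpen_Ioo
  have hαs₂ : α ∈ s₂ := ⟨by linarith, by linarith⟩
  have hsub : ∀ β ∈ s₂, β ∈ Set.Ioo (0:ℝ) 2 := by
    intro β hβ
    obtain ⟨h1, h2⟩ := hβ
    exact ⟨by linarith, by linarith⟩
  set F : ℕ → ℝ → ℝ → ℝ := fun k β t =>
    (1/π) * (Real.cos (r*t + ℓ₁*(π/2)) * t^ℓ₁) *
      (Real.log t ^ k * (qpoly k).eval (t^β) * Real.exp (-(t^β))) with hF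
  have heqon : Set.EqOn (fun b => iteratedDeriv ℓ₁ (fun s => stablePdf s b) r)
      (fun β => ∫ t in Set.Ioi (0:ℝ), F 0 β t) s₂ := by
    intro β hβ
    simp only []
    rw [stage1 (hsub β hβ) ℓ₁ r]
    congr 1
    funext t
    simp only [hF, qpoly, pow_zero, Polynomial.eval_one, one_mul, mul_one]
    ring
  have hstep := (heqon.iteratedDeriv_of_isOpen hs₂open ℓ₂) hαs₂
  rw [hstep]
  apply iteratedDeriv_param F hs₂open ℓ₂ ?_ ?_ ?_ α hαs₂
  · -- measurability
    intro k hk β hβ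
    refine ContinuousOn.aestronglyMeasurable ?_ measurableSet_Ioi
    have h1 : Continuous (fun t : ℝ => (1/π) * (Real.cos (r*t + ℓ₁*(π/2)) * t^ℓ₁)) := by
      fun_prop
    have hrp : ContinuousOn (fun t : ℝ => t ^ β) (Set.Ioi (0:ℝ)) :=
      ContinuousOn.rpow_const continuousOn_id (fun x hx => Or.inl (ne_of_gt hx))
    have hlog : ContinuousOn (fun t : ℝ => Real.log t) (Set.Ioi 0) :=
      Real.continuousOn_log.mono (fun x hx => ne_of_gt hx)
    exact h1.continuousOn.mul
      (((hlog.pow k).mul ((qpoly k).continuous.comp_continuousOn hrp)).mul exp_rpow_contOn)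
  · -- bounds
    intro k hk
    obtain ⟨C, hC0, hC⟩ := poly_exp_bound (qpoly k)
    have hσ : (-1:ℝ) < (ℓ₁:ℝ) := by
      have := Nat.cast_nonneg (α := ℝ) ℓ₁; linarith
    refine ⟨fun t => (C * Real.exp 2⁻¹ / π) *
      (|Real.log t| ^ k * t ^ (ℓ₁:ℝ) * Real.exp (-(2⁻¹ * t^(α/2)))),
      (lemA k hσ (by norm_num) (by linarith)).const_mul _, ?_⟩
    intro β hβ t ht
    have ht0 : (0:ℝ) < t := ht
    have hβa : α/2 ≤ β := le_of_lt hβ.1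
    have hβ0 : (0:ℝ) < β := lt_of_lt_of_le (by linarith) hβa
    have htβ : (0:ℝ) < t ^ β := Real.rpow_pos_of_pos ht0 _
    have hexp : Real.exp (-(2⁻¹ * t^β)) ≤ Real.exp 2⁻¹ * Real.exp (-(2⁻¹ * t^(α/2))) := by
      rw [← Real.exp_add, Real.exp_le_exp]
      have h : t ^ (α/2) ≤ 1 + t ^ β := by
        rcases le_or_gt t 1 with h | h
        · have := Real.rpow_le_one (le_of_lt ht0) h (by linarith : (0:ℝ) ≤ α/2)
          linarith
        · have := Real.rpow_le_rpow_of_exponent_le (le_of_lt h) hβa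
          linarith
      linarith
    have hpoly : |(qpoly k).eval (t^β)| * Real.exp (-(t^β))
        ≤ C * Real.exp (-(2⁻¹ * t^β)) := hC _ (le_of_lt htβ)
    rw [hF]
    simp only []
    rw [abs_mul, abs_mul, abs_mul, abs_mul, abs_mul]
    rw [abs_of_pos (show (0:ℝ) < 1/π by positivity),
      abs_of_pos (pow_pos ht0 ℓ₁), abs_of_pos (Real.exp_pos _), abs_pow]
    have hcos : |Real.cos (r*t + ℓ₁*(π/2))| ≤ 1 := Real.abs_cos_le_one _
    calc 1/π * (|Real.cos (r*t + ℓ₁*(π/2))| * t^ℓ₁) *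
          (|Real.log t| ^ k * |(qpoly k).eval (t^β)| * Real.exp (-(t^β)))
        ≤ 1/π * (1 * t^ℓ₁) *
          (|Real.log t| ^ k * (C * Real.exp (-(2⁻¹ * t^β)))) := by
          apply mul_le_mul
          · apply mul_le_mul_of_nonneg_left (mul_le_mul_of_nonneg_right hcos (by positivity))
              (by positivity)
          · rw [mul_assoc]
            exact mul_le_mul_of_nonneg_left hpoly (by positivity)
          · positivity
          · positivity
      _ ≤ 1/π * (1 * t^ℓ₁) *
          (|Real.log t| ^ k * (C * (Real.exp 2⁻¹ * Real.exp (-(2⁻¹ * t^(α/2)))))) := by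
          apply mul_le_mul_of_nonneg_left _ (by positivity)
          apply mul_le_mul_of_nonneg_left _ (by positivity)
          exact mul_le_mul_of_nonneg_left hexp hC0
      _ = (C * Real.exp 2⁻¹ / π) *
          (|Real.log t| ^ k * t ^ (ℓ₁:ℝ) * Real.exp (-(2⁻¹ * t^(α/2)))) := by
          rw [Real.rpow_natCast]
          ring
  · -- derivatives
    intro k hk β hβ t ht
    have ht0 : (0:ℝ) < t := ht
    exact (qpoly_hasDerivAt k ht0 β).const_mul ((1/π) * (Real.cos (r*t + ℓ₁*(π/2)) * t^ℓ₁))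

end Stages

/-- Bound for the mixed partial derivatives of the symmetric α-stable density: if `p` is the
polynomial of degree `ℓ₂` with `∂^{ℓ₂}/∂α^{ℓ₂}[e^{−t^α}] = (log t)^{ℓ₂} p(t^α) e^{−t^α}`
(`p ≡ 1` for `ℓ₂ = 0`), then for `α ∈ (0,2)` and `r ≥ 0`,
`|∂^{ℓ₁+ℓ₂} f/(∂r^{ℓ₁}∂α^{ℓ₂})(r;α)| ≤ (1/(π α^{ℓ₂+1})) ∫₀^∞ |log t|^{ℓ₂} t^{(ℓ₁+1)/α−1}`
`· |p(t)| e^{−t} dt`, and in particular this integral is finite. -/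
theorem stablePdf_mixed_deriv_bound (ℓ₁ ℓ₂ : ℕ) (α : ℝ) (hα : α ∈ Set.Ioo (0:ℝ) 2)
    (r : ℝ) (hr : 0 ≤ r) (p : Polynomial ℝ) (hdeg : p.natDegree = ℓ₂)
    (hp : ∀ t : ℝ, 0 < t → ∀ β : ℝ, 0 < β →
      iteratedDeriv ℓ₂ (fun b => Real.exp (-(t ^ b))) β
        = Real.log t ^ ℓ₂ * p.eval (t ^ β) * Real.exp (-(t ^ β))) :
    IntegrableOn (fun t : ℝ =>
        |Real.log t| ^ ℓ₂ * t ^ ((ℓ₁ + 1) / α - 1) * |p.eval t| * Real.exp (-t))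
      (Set.Ioi (0:ℝ))
    ∧ |iteratedDeriv ℓ₂ (fun b => iteratedDeriv ℓ₁ (fun s => stablePdf s b) r) α|
      ≤ (1 / (π * α ^ (ℓ₂ + 1))) * ∫ t in Set.Ioi (0:ℝ),
          |Real.log t| ^ ℓ₂ * t ^ ((ℓ₁ + 1) / α - 1) * |p.eval t| * Real.exp (-t) := by
  obtain ⟨hα0, hα2⟩ := hα
  have hpq : p = qpoly ℓ₂ := by
    apply qpoly_unique
    intro t ht ht1
    have h1 := hp t ht 1 one_pos
    have h2 := iteratedDeriv_exp_rpow ℓ₂ ht 1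
    rw [h1, Real.rpow_one] at h2
    exact h2
  obtain ⟨C, hC0, hC⟩ := poly_exp_bound p
  have hσ : (-1:ℝ) < ((ℓ₁:ℝ) + 1) / α - 1 := by
    have h0 : (0:ℝ) < ((ℓ₁:ℝ) + 1) / α := by positivity
    linarith
  have hσℓ : (-1:ℝ) < (ℓ₁:ℝ) := by
    have := Nat.cast_nonneg (α := ℝ) ℓ₁; linarith
  set f : ℝ → ℝ := fun t =>
    |Real.log t| ^ ℓ₂ * t ^ (((ℓ₁:ℝ) + 1) / α - 1) * |p.eval t| * Real.exp (-t) with hf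
  have hrpcont : ∀ b : ℝ, ContinuousOn (fun x : ℝ => x ^ b) (Set.Ioi (0:ℝ)) := fun b =>
    ContinuousOn.rpow_const continuousOn_id (fun x hx => Or.inl (ne_of_gt hx))
  have hlogcont : ContinuousOn (fun t : ℝ => Real.log t) (Set.Ioi (0:ℝ)) :=
    Real.continuousOn_log.mono (fun x hx => ne_of_gt hx)
  have hfmeas : AEStronglyMeasurable f (volume.restrict (Set.Ioi (0:ℝ))) := by
    refine ContinuousOn.aestronglyMeasurable ?_ measurableSet_Ioi
    exact (((hlogcont.abs.pow ℓ₂).mul (hrpcont _)).mul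
      ((p.continuous.comp continuous_id).abs.continuousOn)).mul
      (Real.continuous_exp.comp continuous_neg).continuousOn
  have hfint : IntegrableOn f (Set.Ioi (0:ℝ)) := by
    apply integrableOn_of_bound f
      (fun t => C * (|Real.log t| ^ ℓ₂ * t ^ (((ℓ₁:ℝ) + 1) / α - 1) * Real.exp (-(2⁻¹ * t))))
      hfmeas ((lemB ℓ₂ hσ (by norm_num)).const_mul C)
    intro t ht
    have ht0 : (0:ℝ) < t := ht
    have hfnn : 0 ≤ f t := by
      rw [hf]; positivity
    rw [abs_of_nonneg hfnn, hf]
    calc |Real.log t| ^ ℓ₂ * t ^ (((ℓ₁:ℝ) + 1) / α - 1) * |p.eval t| * Real.exp (-t)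
        = (|Real.log t| ^ ℓ₂ * t ^ (((ℓ₁:ℝ) + 1) / α - 1)) * (|p.eval t| * Real.exp (-t)) := by
          ring
      _ ≤ (|Real.log t| ^ ℓ₂ * t ^ (((ℓ₁:ℝ) + 1) / α - 1)) * (C * Real.exp (-(2⁻¹ * t))) := by
          apply mul_le_mul_of_nonneg_left (hC t (le_of_lt ht0)) (by positivity)
      _ = C * (|Real.log t| ^ ℓ₂ * t ^ (((ℓ₁:ℝ) + 1) / α - 1) * Real.exp (-(2⁻¹ * t))) := by
          ring
  refine ⟨hfint, ?_⟩
  set g : ℝ → ℝ := fun t =>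
    t^ℓ₁ * |Real.log t| ^ ℓ₂ * |p.eval (t^α)| * Real.exp (-(t^α)) with hg
  have hgmeas : AEStronglyMeasurable g (volume.restrict (Set.Ioi (0:ℝ))) := by
    refine ContinuousOn.aestronglyMeasurable ?_ measurableSet_Ioi
    exact ((((continuous_pow ℓ₁).continuousOn.mul (hlogcont.abs.pow ℓ₂)).mul
      ((p.continuous.abs.comp_continuousOn (hrpcont α)))).mul exp_rpow_contOn)
  have hgint : IntegrableOn g (Set.Ioi (0:ℝ)) := by
    apply integrableOn_of_bound g
      (fun t => C * (|Real.log t| ^ ℓ₂ * t ^ (ℓ₁:ℝ) * Real.exp (-(2⁻¹ * t^α))))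
      hgmeas ((lemA ℓ₂ hσℓ (by norm_num) hα0).const_mul C)
    intro t ht
    have ht0 : (0:ℝ) < t := ht
    have htα : (0:ℝ) < t^α := Real.rpow_pos_of_pos ht0 _
    have hgnn : 0 ≤ g t := by rw [hg]; positivity
    rw [abs_of_nonneg hgnn, hg]
    calc t^ℓ₁ * |Real.log t| ^ ℓ₂ * |p.eval (t^α)| * Real.exp (-(t^α))
        = (t^ℓ₁ * |Real.log t| ^ ℓ₂) * (|p.eval (t^α)| * Real.exp (-(t^α))) := by ring
      _ ≤ (t^ℓ₁ * |Real.log t| ^ ℓ₂) * (C * Real.exp (-(2⁻¹ * t^α))) := by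
          apply mul_le_mul_of_nonneg_left (hC _ (le_of_lt htα)) (by positivity)
      _ = C * (|Real.log t| ^ ℓ₂ * t ^ (ℓ₁:ℝ) * Real.exp (-(2⁻¹ * t^α))) := by
          rw [Real.rpow_natCast]; ring
  have hsubst : ∫ t in Set.Ioi (0:ℝ), f t
      = α^(ℓ₂+1) * ∫ t in Set.Ioi (0:ℝ), g t := by
    have hα' : α ≠ 0 := ne_of_gt hα0
    have hcomp := integral_comp_rpow_Ioi f hα'
    rw [← hcomp]
    rw [← MeasureTheory.integral_const_mul]
    apply MeasureTheory.setIntegral_congr_fun measurableSet_Ioi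
    intro x hx
    have hx0 : (0:ℝ) < x := hx
    have hxα : (0:ℝ) < x^α := Real.rpow_pos_of_pos hx0 _
    simp only [smul_eq_mul, hf, hg]
    have hlg : Real.log (x^α) = α * Real.log x := Real.log_rpow hx0 _
    have hppow : (x^α) ^ (((ℓ₁:ℝ) + 1) / α - 1) = x ^ ((ℓ₁:ℝ) + 1 - α) := by
      rw [← Real.rpow_mul (le_of_lt hx0)]
      congr 1
      field_simp
    rw [hlg, hppow, abs_of_pos hα0]
    have habs : |α * Real.log x| ^ ℓ₂ = α ^ ℓ₂ * |Real.log x| ^ ℓ₂ := by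
      rw [abs_mul, mul_pow, abs_of_pos hα0]
    rw [habs]
    have hxx : x ^ (α - 1) * x ^ ((ℓ₁:ℝ) + 1 - α) = x ^ ℓ₁ := by
      rw [← Real.rpow_add hx0, ← Real.rpow_natCast x ℓ₁]
      congr 1
      ring
    rw [pow_succ]
    calc α * x ^ (α - 1) *
          (α ^ ℓ₂ * |Real.log x| ^ ℓ₂ * x ^ ((ℓ₁:ℝ) + 1 - α) * |p.eval (x^α)| *
            Real.exp (-(x^α)))
        = (α ^ ℓ₂ * α) * ((x ^ (α-1) * x ^ ((ℓ₁:ℝ) + 1 - α)) * |Real.log x| ^ ℓ₂ *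
            |p.eval (x^α)| * Real.exp (-(x^α))) := by ring
      _ = α ^ ℓ₂ * α * (x ^ ℓ₁ * |Real.log x| ^ ℓ₂ * |p.eval (x^α)| * Real.exp (-(x^α))) := by
          rw [hxx]
  have hder := stage2 ℓ₁ ℓ₂ ⟨hα0, hα2⟩ r
  rw [hder, ← hpq]
  have hbound : |∫ t in Set.Ioi (0:ℝ), (1/π) * (Real.cos (r*t + ℓ₁*(π/2)) * t^ℓ₁) *
      (Real.log t ^ ℓ₂ * p.eval (t^α) * Real.exp (-(t^α)))|
      ≤ ∫ t in Set.Ioi (0:ℝ), (1/π) * g t := by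
    rw [← Real.norm_eq_abs]
    apply MeasureTheory.norm_integral_le_of_norm_le (hgint.const_mul (1/π))
    rw [ae_restrict_iff' measurableSet_Ioi]
    refine Filter.Eventually.of_forall (fun t ht => ?_)
    have ht0 : (0:ℝ) < t := ht
    rw [Real.norm_eq_abs, hg]
    rw [abs_mul]
    have hcos : |Real.cos (r*t + ℓ₁*(π/2))| ≤ 1 := Real.abs_cos_le_one _
    calc |(1/π) * (Real.cos (r*t + ℓ₁*(π/2)) * t^ℓ₁)| *
          |Real.log t ^ ℓ₂ * p.eval (t^α) * Real.exp (-(t^α))|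
        ≤ (1/π * (1 * t^ℓ₁)) * (|Real.log t| ^ ℓ₂ * |p.eval (t^α)| * Real.exp (-(t^α))) := by
          apply mul_le_mul
          · rw [abs_mul, abs_mul, abs_of_pos (show (0:ℝ) < 1/π by positivity),
              abs_of_pos (pow_pos ht0 ℓ₁)]
            apply mul_le_mul_of_nonneg_left _ (by positivity)
            exact mul_le_mul_of_nonneg_right hcos (by positivity)
          · rw [abs_mul, abs_mul, abs_pow, abs_of_pos (Real.exp_pos _)]
          · positivity
          · positivity
      _ = 1/π * (t^ℓ₁ * |Real.log t| ^ ℓ₂ * |p.eval (t^α)| * Real.exp (-(t^α))) := by ring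
  apply le_trans hbound
  rw [MeasureTheory.integral_const_mul]
  have hrw : ∫ t in Set.Ioi (0:ℝ),
      |Real.log t| ^ ℓ₂ * t ^ ((↑ℓ₁ + 1) / α - 1) * |p.eval t| * Real.exp (-t)
      = α^(ℓ₂+1) * ∫ t in Set.Ioi (0:ℝ), g t := hsubst
  rw [hrw]
  apply le_of_eq
  have hπ : (0:ℝ) < π := Real.pi_pos
  have hαp : (0:ℝ) < α^(ℓ₂+1) := by positivity
  field_simp
end
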